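/- Fix an index α. Let λ^1,…,λ^n and μ^1,…,μ^n be smooth on Ω with λ^i ≠ λ^j pointwise for i ≠ j, satisfying ∂_j μ^i/(μ^j − μ^i) = ∂_j λ^i/(λ^j − λ^i) for all i ≠ j, with μ^α, ∂_α μ^α and μ^α − μ^i (i ≠ α) nonvanishing. Define the adjoint-Lévy-transformed velocities Λ^α = (λ^α ∂_α μ^α − μ^α ∂_α λ^α)/∂_α μ^α and Λ^i = (λ^i μ^α − λ^α μ^i)/(μ^α − μ^i) for i ≠ α, assumed pairwise distinct pointwise, and set h = 1/μ^α, g = λ^α/μ^α. Then: (i) (h, g) is a conservation law of the transformed system, i.e. ∂_i g = Λ^i ∂_i h for all i; and (ii) the Lévy transformation L_α generated by (h, g) returns the original velocities: g/h = λ^α and, for i ≠ α, (Λ^i ∂_α h − A_{iα} g)/(∂_α h − A_{iα} h) = λ^i, where A_{iα} = ∂_α Λ^i/(Λ^α − Λ^i) (assuming ∂_α h − A_{iα} h is nonvanishing). -/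

import Mathlib

/-- Partial derivative with respect to the `i`-th coordinate. -/
noncomputable def pd {n : ℕ} {F : Type*} [NormedAddCommGroup F] [NormedSpace ℝ F]
    (i : Fin n) (w : (Fin n → ℝ) → F) : (Fin n → ℝ) → F :=
  fun p => fderiv ℝ w p (Pi.single i 1)

section helpers
variable {n : ℕ} {f g : (Fin n → ℝ) → ℝ} {p : Fin n → ℝ}

lemma pd_sub (i : Fin n) (hf : DifferentiableAt ℝ f p) (hg : DifferentiableAt ℝ g p) :
    pd i (fun q => f q - g q) p = pd i f p - pd i g p := by
  simp [pd, fderiv_fun_sub hf hg]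

lemma pd_mul (i : Fin n) (hf : DifferentiableAt ℝ f p) (hg : DifferentiableAt ℝ g p) :
    pd i (fun q => f q * g q) p = pd i f p * g p + f p * pd i g p := by
  simp [pd, fderiv_fun_mul hf hg]
  ring

lemma pd_inv (i : Fin n) (hg : DifferentiableAt ℝ g p) (h0 : g p ≠ 0) :
    pd i (fun q => (g q)⁻¹) p = -pd i g p / g p ^ 2 := by
  have h := ((hasFDerivAt_inv' (𝕜 := ℝ) h0).comp p hg.hasFDerivAt).fderiv
  simp only [pd]
  rw [show (fun q => (g q)⁻¹) = Inv.inv ∘ g from rfl, h]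
  simp only [ContinuousLinearMap.comp_apply, ContinuousLinearMap.neg_apply,
    ContinuousLinearMap.mulLeftRight_apply]
  rw [eq_div_iff (pow_ne_zero 2 h0)]
  field_simp

lemma pd_div (i : Fin n) (hf : DifferentiableAt ℝ f p) (hg : DifferentiableAt ℝ g p)
    (h0 : g p ≠ 0) :
    pd i (fun q => f q / g q) p = (pd i f p * g p - f p * pd i g p) / g p ^ 2 := by
  simp only [div_eq_mul_inv]
  rw [pd_mul (g := fun q => (g q)⁻¹) i hf (hg.inv h0), pd_inv i hg h0]
  field_simp
  ring

end helpers

/-- `(h, g) = (1/μ^α, λ^α/μ^α)` is a conservation law of the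
adjoint-Lévy-transformed system (velocities `Λ`), and the Lévy transformation `L_α`
generated by `(h, g)` returns the original velocities `λ`; here
`A_{iα} = ∂_α Λ^i/(Λ^α − Λ^i)`. -/
theorem stmt19 {n : ℕ} (Ω : Set (Fin n → ℝ)) (hΩ : IsOpen Ω) (α : Fin n)
    (lam mu : Fin n → (Fin n → ℝ) → ℝ)
    (hlam : ∀ i, ContDiffOn ℝ (⊤ : ℕ∞) (lam i) Ω)
    (hmusm : ∀ i, ContDiffOn ℝ (⊤ : ℕ∞) (mu i) Ω)
    (hdist : ∀ i j, i ≠ j → ∀ p ∈ Ω, lam i p ≠ lam j p)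
    (hcomm : ∀ i j, i ≠ j → ∀ p ∈ Ω,
      pd j (mu i) p / (mu j p - mu i p) = pd j (lam i) p / (lam j p - lam i p))
    (hmuα0 : ∀ p ∈ Ω, mu α p ≠ 0)
    (hdmuα0 : ∀ p ∈ Ω, pd α (mu α) p ≠ 0)
    (hmudiff : ∀ i, i ≠ α → ∀ p ∈ Ω, mu α p - mu i p ≠ 0)
    (Lam : Fin n → (Fin n → ℝ) → ℝ)
    (hLamα : ∀ p, Lam α p =
      (lam α p * pd α (mu α) p - mu α p * pd α (lam α) p) / pd α (mu α) p)
    (hLami : ∀ i, i ≠ α → ∀ p, Lam i p =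
      (lam i p * mu α p - lam α p * mu i p) / (mu α p - mu i p))
    (hLamdist : ∀ i j, i ≠ j → ∀ p ∈ Ω, Lam i p ≠ Lam j p)
    (h g : (Fin n → ℝ) → ℝ)
    (hh : ∀ p, h p = 1 / mu α p)
    (hg : ∀ p, g p = lam α p / mu α p)
    (hden : ∀ i, i ≠ α → ∀ p ∈ Ω,
      pd α h p - (pd α (Lam i) p / (Lam α p - Lam i p)) * h p ≠ 0) :
    (∀ i, ∀ p ∈ Ω, pd i g p = Lam i p * pd i h p)
      ∧
    (∀ p ∈ Ω, g p / h p = lam α p)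
      ∧
    (∀ i, i ≠ α → ∀ p ∈ Ω,
        (Lam i p * pd α h p - (pd α (Lam i) p / (Lam α p - Lam i p)) * g p)
          / (pd α h p - (pd α (Lam i) p / (Lam α p - Lam i p)) * h p) = lam i p) := by
  have diffAt : ∀ (f : (Fin n → ℝ) → ℝ), ContDiffOn ℝ (⊤ : ℕ∞) f Ω →
      ∀ p ∈ Ω, DifferentiableAt ℝ f p := fun f hf p hp =>
    (hf.contDiffAt (hΩ.mem_nhds hp)).differentiableAt (by simp)
  have hh' : h = fun q => (mu α q)⁻¹ := funext fun q => by rw [hh q, one_div]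
  have hg' : g = fun q => lam α q / mu α q := funext hg
  subst hh' hg'
  refine ⟨?_, ?_, ?_⟩
  · -- conservation law
    intro i p hp
    have dv := diffAt _ (hmusm α) p hp
    have dlb := diffAt _ (hlam α) p hp
    have hv := hmuα0 p hp
    rw [pd_inv (g := mu α) i dv hv, pd_div (f := lam α) (g := mu α) i dlb dv hv]
    by_cases hiα : i = α
    · subst hiα
      rw [hLamα p]
      have hv' := hdmuα0 p hp
      field_simp
      ring
    · rw [hLami i hiα p]
      have hDi : mu α p - mu i p ≠ 0 := hmudiff i hiα p hp
      have hui : mu i p - mu α p ≠ 0 := fun hc => hDi (by linarith)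
      have hli : lam i p - lam α p ≠ 0 := sub_ne_zero.mpr (hdist i α hiα p hp)
      have hrel := hcomm α i (fun hc => hiα hc.symm) p hp
      rw [div_eq_div_iff hui hli] at hrel
      field_simp
      linear_combination (mu α p) * hrel
  · -- g/h = lam α
    intro p hp
    have hv := hmuα0 p hp
    show lam α p / mu α p / (mu α p)⁻¹ = lam α p
    field_simp
  · -- Levy transform returns lam
    intro i hiα p hp
    have dv := diffAt _ (hmusm α) p hp
    have du := diffAt _ (hmusm i) p hp
    have dlb := diffAt _ (hlam α) p hp
    have dla := diffAt _ (hlam i) p hp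
    have hv := hmuα0 p hp
    have hv' := hdmuα0 p hp
    have hD : mu α p - mu i p ≠ 0 := hmudiff i hiα p hp
    have hba : lam α p - lam i p ≠ 0 := sub_ne_zero.mpr (hdist α i (fun hc => hiα hc.symm) p hp)
    -- commuting relation at (i, α)
    have hrel := hcomm i α hiα p hp
    rw [div_eq_div_iff hD hba] at hrel
    -- X
    set X : ℝ := pd α (mu α) p * (lam α p - lam i p) - pd α (lam α) p * (mu α p - mu i p) with hXdef
    have hLieq : Lam i = fun q => (lam i q * mu α q - lam α q * mu i q) / (mu α q - mu i q) :=
      funext (hLami i hiα)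
    have pdLam : pd α (Lam i) p = mu i p * X / (mu α p - mu i p) ^ 2 := by
      rw [hLieq, pd_div (f := fun q => lam i q * mu α q - lam α q * mu i q)
            (g := fun q => mu α q - mu i q) α
            ((dla.mul dv).sub (dlb.mul du)) (dv.sub du) hD,
          pd_sub (f := fun q => lam i q * mu α q) (g := fun q => lam α q * mu i q) α
            (dla.mul dv) (dlb.mul du),
          pd_sub (f := mu α) (g := mu i) α dv du,
          pd_mul (f := lam i) (g := mu α) α dla dv,
          pd_mul (f := lam α) (g := mu i) α dlb du]
      rw [div_eq_div_iff (pow_ne_zero 2 hD) (pow_ne_zero 2 hD), hXdef]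
      linear_combination (-(mu α p) * (mu α p - mu i p) ^ 2) * hrel
    have hXval : Lam α p - Lam i p =
        mu α p * X / (pd α (mu α) p * (mu α p - mu i p)) := by
      rw [hLamα p, hLami i hiα p, hXdef]
      field_simp
      ring
    have hΛ0 : Lam α p - Lam i p ≠ 0 :=
      sub_ne_zero.mpr (hLamdist α i (fun hc => hiα hc.symm) p hp)
    have hX0 : X ≠ 0 := by
      intro h0
      rw [hXval, h0, mul_zero, zero_div] at hΛ0
      exact hΛ0 rfl
    have hA : pd α (Lam i) p / (Lam α p - Lam i p) =
        mu i p * pd α (mu α) p / (mu α p * (mu α p - mu i p)) := by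
      rw [pdLam, hXval]
      field_simp
    have pdh : pd α (fun q => (mu α q)⁻¹) p = -pd α (mu α) p / mu α p ^ 2 :=
      pd_inv α dv hv
    have hden0 := hden i hiα p hp
    rw [pdh, hA] at hden0
    beta_reduce at hden0
    rw [hA, hLami i hiα p, pdh]
    rw [div_eq_iff hden0]
    field_simp
    ring
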